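/- Let d, q be positive integers, let D be a real d × q matrix, ν ∈ ℝ^d, λ̄ > 0, γ̄ ≥ 0, and define f(η) = (1/2)‖η − ν‖₂² + λ̄‖Dᵀη‖₂ + γ̄‖η‖₂. Suppose τ > 0 satisfies ‖(DᵀD + τI)⁻¹Dᵀν‖₂ = λ̄, and set P_τ = I − D(DᵀD + τI)⁻¹Dᵀ (the matrix DᵀD + τI is invertible since it is positive definite). Then the vector η̂ = max(1 − γ̄/‖P_τ ν‖₂, 0) · P_τ ν (interpreted as η̂ = 0 when P_τ ν = 0) is a global minimizer of f over ℝ^d. -/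

import Mathlib

/-- Euclidean (ℓ₂) norm of a finitely indexed real vector. -/
noncomputable def l2norm {ι : Type*} [Fintype ι] (v : ι → ℝ) : ℝ :=
  Real.sqrt (∑ i, (v i) ^ 2)

lemma l2norm_nonneg {ι : Type*} [Fintype ι] (v : ι → ℝ) : 0 ≤ l2norm v :=
  Real.sqrt_nonneg _

lemma l2norm_sq {ι : Type*} [Fintype ι] (v : ι → ℝ) :
    l2norm v ^ 2 = ∑ i, (v i) ^ 2 :=
  Real.sq_sqrt (Finset.sum_nonneg fun _ _ => sq_nonneg _)

lemma l2norm_smul {ι : Type*} [Fintype ι] {c : ℝ} (hc : 0 ≤ c) (v : ι → ℝ) :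
    l2norm (c • v) = c * l2norm v := by
  unfold l2norm
  have : ∑ i, ((c • v) i) ^ 2 = c ^ 2 * ∑ i, (v i) ^ 2 := by
    rw [Finset.mul_sum]
    refine Finset.sum_congr rfl fun i _ => ?_
    simp [smul_eq_mul]; ring
  rw [this, Real.sqrt_mul (sq_nonneg c), Real.sqrt_sq hc]

lemma l2norm_cauchy {ι : Type*} [Fintype ι] (u v : ι → ℝ) :
    dotProduct u v ≤ l2norm u * l2norm v := by
  have h := Finset.sum_mul_sq_le_sq_mul_sq Finset.univ u v
  calc dotProduct u v ≤ |∑ i, u i * v i| := le_abs_self _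
    _ = Real.sqrt ((∑ i, u i * v i) ^ 2) := (Real.sqrt_sq_eq_abs _).symm
    _ ≤ Real.sqrt ((∑ i, (u i) ^ 2) * (∑ i, (v i) ^ 2)) := Real.sqrt_le_sqrt h
    _ = l2norm u * l2norm v :=
      Real.sqrt_mul (Finset.sum_nonneg fun _ _ => sq_nonneg _) _

lemma l2norm_dot_self {ι : Type*} [Fintype ι] (v : ι → ℝ) :
    dotProduct v v = l2norm v ^ 2 := by
  rw [l2norm_sq]; exact Finset.sum_congr rfl fun i _ => by ring

/-- Abstract subgradient optimality lemma. -/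
lemma key_ineq {ι κ : Type*} [Fintype ι] [Fintype κ]
    (lam gam : ℝ) (ν ηhat η s : ι → ℝ) (w u uhat : κ → ℝ)
    (hwle : l2norm w ≤ lam) (hsle : l2norm s ≤ gam)
    (h3 : dotProduct w uhat = lam * l2norm uhat)
    (h4 : dotProduct s ηhat = gam * l2norm ηhat)
    (h5 : (∑ i, (ηhat i - ν i + s i) * (η i - ηhat i))
        + (dotProduct w u - dotProduct w uhat) = 0) :
    (1/2) * (l2norm fun i => ηhat i - ν i) ^ 2 + lam * l2norm uhat + gam * l2norm ηhat
      ≤ (1/2) * (l2norm fun i => η i - ν i) ^ 2 + lam * l2norm u + gam * l2norm η := by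
  have cs1 : dotProduct w u ≤ lam * l2norm u :=
    le_trans (l2norm_cauchy w u) (mul_le_mul_of_nonneg_right hwle (l2norm_nonneg u))
  have cs2 : dotProduct s η ≤ gam * l2norm η :=
    le_trans (l2norm_cauchy s η) (mul_le_mul_of_nonneg_right hsle (l2norm_nonneg η))
  have hexp : (l2norm fun i => η i - ν i) ^ 2
      = (l2norm fun i => ηhat i - ν i) ^ 2
        + 2 * (∑ i, (ηhat i - ν i) * (η i - ηhat i))
        + (l2norm fun i => η i - ηhat i) ^ 2 := by
    rw [l2norm_sq, l2norm_sq, l2norm_sq, Finset.mul_sum, ← Finset.sum_add_distrib,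
      ← Finset.sum_add_distrib]
    exact Finset.sum_congr rfl fun i _ => by ring
  have hsplit : (∑ i, (ηhat i - ν i + s i) * (η i - ηhat i))
      = (∑ i, (ηhat i - ν i) * (η i - ηhat i))
        + (dotProduct s η - dotProduct s ηhat) := by
    unfold dotProduct
    rw [← Finset.sum_sub_distrib, ← Finset.sum_add_distrib]
    exact Finset.sum_congr rfl fun i _ => by ring
  have hnn : 0 ≤ (l2norm fun i => η i - ηhat i) ^ 2 := sq_nonneg _
  nlinarith [cs1, cs2, hexp, hsplit, h5, h3, h4, hnn]

/-- Part (iii) of the closed-form proximal solution.  If `τ > 0` satisfies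
`‖(DᵀD + τI)⁻¹Dᵀν‖₂ = λ̄`, and `P_τ = I − D(DᵀD + τI)⁻¹Dᵀ`, then
`η̂ = max(1 − γ̄/‖P_τ ν‖₂, 0) · P_τ ν` globally minimizes
`f(η) = (1/2)‖η − ν‖₂² + λ̄‖Dᵀη‖₂ + γ̄‖η‖₂`. -/
theorem prox_ridge_projection_solution
    (d q : ℕ) (hd : 0 < d) (hq : 0 < q)
    (D : Matrix (Fin d) (Fin q) ℝ) (ν : Fin d → ℝ)
    (lamBar gamBar : ℝ) (hlam : 0 < lamBar) (hgam : 0 ≤ gamBar)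
    (f : (Fin d → ℝ) → ℝ)
    (hf : ∀ η, f η = (1 / 2) * (l2norm (fun i => η i - ν i)) ^ 2
        + lamBar * l2norm (D.transpose.mulVec η) + gamBar * l2norm η)
    (τ : ℝ) (hτ : 0 < τ)
    (hτeq : l2norm ((D.transpose * D + τ • (1 : Matrix (Fin q) (Fin q) ℝ))⁻¹.mulVec
        (D.transpose.mulVec ν)) = lamBar)
    (Pτ : Matrix (Fin d) (Fin d) ℝ)
    (hPτ : Pτ = 1 - D * (D.transpose * D + τ • (1 : Matrix (Fin q) (Fin q) ℝ))⁻¹ * D.transpose) :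
    ∀ η, f (max (1 - gamBar / l2norm (Pτ.mulVec ν)) 0 • Pτ.mulVec ν) ≤ f η := by
  intro η
  set M : Matrix (Fin q) (Fin q) ℝ := D.transpose * D + τ • 1 with hM
  -- M is positive definite, hence invertible
  have hpsd : (D.transpose * D).PosSemidef := by
    have h := Matrix.posSemidef_conjTranspose_mul_self D
    have : D.conjTranspose = D.transpose := by ext i j; simp [Matrix.conjTranspose_apply]
    rwa [this] at h
  have hpd1 : (τ • (1 : Matrix (Fin q) (Fin q) ℝ)).PosDef := by
    have hdiag : (τ • (1 : Matrix (Fin q) (Fin q) ℝ)) = Matrix.diagonal (fun _ => τ) := by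
      ext i j
      by_cases h : i = j <;> simp [Matrix.one_apply, Matrix.diagonal_apply, h]
    rw [hdiag]
    exact Matrix.posDef_diagonal_iff.mpr fun _ => hτ
  have hMpd : M.PosDef := Matrix.PosDef.posSemidef_add hpsd hpd1
  have hMinv : M * M⁻¹ = 1 :=
    Matrix.mul_nonsing_inv M ((Matrix.isUnit_iff_isUnit_det M).mp hMpd.isUnit)
  set w : Fin q → ℝ := M⁻¹.mulVec (D.transpose.mulVec ν) with hwdef
  have hMw : M.mulVec w = D.transpose.mulVec ν := by
    rw [hwdef, Matrix.mulVec_mulVec, hMinv, Matrix.one_mulVec]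
  set p : Fin d → ℝ := Pτ.mulVec ν with hpdef
  have hp : p = ν - D.mulVec w := by
    rw [hpdef, hPτ, Matrix.sub_mulVec, Matrix.one_mulVec, hwdef]
    congr 1
    rw [Matrix.mulVec_mulVec, Matrix.mulVec_mulVec, Matrix.mul_assoc]
  have hDtp : D.transpose.mulVec p = τ • w := by
    have hMsplit : M.mulVec w = (D.transpose * D).mulVec w + τ • w := by
      rw [hM, Matrix.add_mulVec, Matrix.smul_mulVec, Matrix.one_mulVec]
    rw [hp, Matrix.mulVec_sub, Matrix.mulVec_mulVec, ← hMw, hMsplit]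
    abel
  have hwlam : l2norm w = lamBar := hτeq
  set c : ℝ := max (1 - gamBar / l2norm p) 0 with hcdef
  have hc0 : 0 ≤ c := le_max_right _ _
  have hc1 : c ≤ 1 := by
    apply max_le _ zero_le_one
    have : 0 ≤ gamBar / l2norm p := div_nonneg hgam (l2norm_nonneg p)
    linarith
  have huhat : D.transpose.mulVec (c • p) = (c * τ) • w := by
    rw [Matrix.mulVec_smul, hDtp, smul_smul]
  rw [hf, hf, huhat]
  apply key_ineq lamBar gamBar ν (c • p) η ((1 - c) • p) w (D.transpose.mulVec η)
      ((c * τ) • w)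
  · exact le_of_eq hwlam
  · -- ‖(1-c) • p‖ ≤ gamBar
    rw [l2norm_smul (by linarith : (0:ℝ) ≤ 1 - c)]
    by_cases hp0 : l2norm p = 0
    · rw [hp0]; simpa using hgam
    · have hppos : 0 < l2norm p := lt_of_le_of_ne (l2norm_nonneg p) (Ne.symm hp0)
      have h1c : 1 - c ≤ gamBar / l2norm p := by
        have := le_max_left (1 - gamBar / l2norm p) (0:ℝ)
        rw [← hcdef] at this
        linarith
      calc (1 - c) * l2norm p ≤ (gamBar / l2norm p) * l2norm p :=
            mul_le_mul_of_nonneg_right h1c hppos.le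
        _ = gamBar := div_mul_cancel₀ gamBar hp0
  · -- h3
    have hct : 0 ≤ c * τ := mul_nonneg hc0 hτ.le
    rw [dotProduct_smul, smul_eq_mul, l2norm_dot_self, l2norm_smul hct, hwlam]
    ring
  · -- h4
    rw [smul_dotProduct, dotProduct_smul, smul_eq_mul, smul_eq_mul,
      l2norm_dot_self, l2norm_smul hc0]
    by_cases hc : c = 0
    · simp [hc]
    · by_cases hp0 : l2norm p = 0
      · rw [hp0]; ring
      · have hppos : 0 < l2norm p := lt_of_le_of_ne (l2norm_nonneg p) (Ne.symm hp0)
        have hcpos : 0 < c := lt_of_le_of_ne hc0 (Ne.symm hc)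
        have hceq : c = 1 - gamBar / l2norm p := by
          rcases max_cases (1 - gamBar / l2norm p) (0:ℝ) with ⟨h1, _⟩ | ⟨h1, _⟩
          · rw [hcdef, h1]
          · exfalso; rw [hcdef, h1] at hcpos; exact lt_irrefl 0 hcpos
        have hkey : (1 - c) * l2norm p = gamBar := by
          rw [hceq]
          field_simp
          ring
        nlinarith [hkey]
  · -- h5 (stationarity)
    have hsum : ∀ i, (c • p) i - ν i + ((1 - c) • p) i = -(D.mulVec w) i := by
      intro i
      have hpi : p i = ν i - (D.mulVec w) i := by rw [hp]; simp
      simp only [Pi.smul_apply, smul_eq_mul]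
      rw [hpi]; ring
    rw [← huhat, Matrix.dotProduct_mulVec w D.transpose η, Matrix.dotProduct_mulVec w D.transpose (c • p),
      Matrix.vecMul_transpose]
    unfold dotProduct
    rw [← Finset.sum_sub_distrib, ← Finset.sum_add_distrib]
    apply Finset.sum_eq_zero
    intro i _
    rw [hsum i]
    ring
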